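/- For any natural number n ≥ 1, the sum over σ in S_n of sign(σ)/(fix(σ)+1) equals (-1)^(n+1)·n/(n+1). -/

import Mathlib

open Finset Matrix Polynomial

private lemma eval_id (n : ℕ) (hn : 1 ≤ n) (x : ℚ) (hx : x ≠ 1) :
    ∑ σ : Equiv.Perm (Fin n), ((Equiv.Perm.sign σ : ℤ) : ℚ) *
        x ^ (Finset.univ.filter fun i => σ i = i).card =
      (x - 1) ^ (n - 1) * (x + n - 1) := by
  have hc : x - 1 ≠ 0 := sub_ne_zero.mpr hx
  set M : Matrix (Fin n) (Fin n) ℚ :=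
    (x - 1) • (1 + replicateCol Unit (fun _ => (x-1)⁻¹) * replicateRow Unit (fun _ => (1:ℚ))) with hM
  have hMe : ∀ i j, M i j = if i = j then x else 1 := by
    intro i j
    by_cases h : i = j <;>
      · simp [hM, Matrix.smul_apply, Matrix.add_apply, Matrix.one_apply, h,
          Matrix.mul_apply, hc, mul_inv_cancel₀]
        try ring
  have h1 : M.det = ∑ σ : Equiv.Perm (Fin n), ((Equiv.Perm.sign σ : ℤ) : ℚ) *
      x ^ (Finset.univ.filter fun i => σ i = i).card := by
    rw [Matrix.det_apply]
    refine Finset.sum_congr rfl fun σ _ => ?_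
    rw [Units.smul_def, zsmul_eq_mul]
    congr 1
    calc ∏ i, M (σ i) i = ∏ i, (if σ i = i then x else 1) := by
          refine Finset.prod_congr rfl fun i _ => hMe _ _
      _ = x ^ (Finset.univ.filter fun i => σ i = i).card := by
          rw [Finset.prod_ite, Finset.prod_const, Finset.prod_const, one_pow, mul_one]
  have h2 : M.det = (x - 1) ^ (n - 1) * (x + n - 1) := by
    rw [hM, Matrix.det_smul, Matrix.det_one_add_replicateCol_mul_replicateRow]
    simp [dotProduct, Fintype.card_fin]
    have hn' : (x-1)^n = (x-1)^(n-1) * (x-1) := by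
      rw [← pow_succ, Nat.sub_add_cancel hn]
    rw [hn']
    field_simp
    ring
  rw [← h1, h2]

/-- The linear functional sending `X^k ↦ 1/(k+1)` ("integration over [0,1]"). -/
noncomputable def L : ℚ[X] →ₗ[ℚ] ℚ :=
  Polynomial.lsum (fun k => ((k + 1 : ℚ))⁻¹ • LinearMap.id)

private lemma L_term (c : ℚ) (k : ℕ) : L (Polynomial.C c * X ^ k) = c / (k + 1) := by
  rw [C_mul_X_pow_eq_monomial]
  show (Polynomial.monomial k c).sum _ = _
  rw [Polynomial.sum_monomial_index]
  · simp [div_eq_inv_mul]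
  · simp

private lemma alt_sum (k : ℕ) :
    ∑ m ∈ range (k + 1), (-1 : ℚ) ^ (m + k) * (k.choose m) / (m + 1)
      = (-1) ^ k / (k + 1) := by
  have key : ∑ m ∈ range (k + 1), (-1 : ℚ) ^ m * ((k + 1).choose (m + 1)) = 1 := by
    have h0 : (∑ i ∈ range (k + 2), ((-1 : ℤ) ^ i * (k + 1).choose i)) = 0 :=
      Int.alternating_sum_range_choose_of_ne (Nat.succ_ne_zero k)
    have h0' : (∑ i ∈ range (k + 2), ((-1 : ℚ) ^ i * (k + 1).choose i)) = 0 := by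
      have := congrArg (fun z : ℤ => (z : ℚ)) h0
      push_cast at this
      simpa using this
    rw [Finset.sum_range_succ'] at h0'
    simp only [pow_succ, pow_zero, one_mul, Nat.choose_zero_right, Nat.cast_one] at h0'
    have : ∑ i ∈ range (k + 1), (-1 : ℚ) ^ i * (-1) * ((k + 1).choose (i + 1)) = -1 := by
      linarith
    calc ∑ m ∈ range (k + 1), (-1 : ℚ) ^ m * ((k + 1).choose (m + 1))
        = -∑ i ∈ range (k + 1), (-1 : ℚ) ^ i * (-1) * ((k + 1).choose (i + 1)) := by
          rw [← Finset.sum_neg_distrib]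
          exact Finset.sum_congr rfl fun i _ => by ring
      _ = 1 := by rw [this]; ring
  have hterm : ∀ m ∈ range (k + 1),
      (-1 : ℚ) ^ (m + k) * (k.choose m) / (m + 1)
        = (-1) ^ k / (k + 1) * ((-1 : ℚ) ^ m * ((k + 1).choose (m + 1))) := by
    intro m _
    have hch : ((k + 1 : ℕ) * k.choose m : ℚ) = ((k + 1).choose (m + 1) * (m + 1) : ℕ) := by
      exact_mod_cast congrArg (fun z : ℕ => (z : ℚ)) (Nat.add_one_mul_choose_eq k m)
    push_cast at hch
    have hm1 : (m : ℚ) + 1 ≠ 0 := by positivity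
    have hk1 : (k : ℚ) + 1 ≠ 0 := by positivity
    have hval : (k.choose m : ℚ) / (m + 1) = ((k + 1).choose (m + 1) : ℚ) / (k + 1) := by
      rw [div_eq_div_iff hm1 hk1]
      linarith
    calc (-1 : ℚ) ^ (m + k) * (k.choose m) / (m + 1)
        = (-1 : ℚ) ^ m * (-1) ^ k * ((k.choose m : ℚ) / (m + 1)) := by rw [pow_add]; ring
      _ = (-1 : ℚ) ^ m * (-1) ^ k * (((k + 1).choose (m + 1) : ℚ) / (k + 1)) := by rw [hval]
      _ = (-1) ^ k / (k + 1) * ((-1 : ℚ) ^ m * ((k + 1).choose (m + 1))) := by ring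
  rw [Finset.sum_congr rfl hterm, ← Finset.mul_sum, key, mul_one]

private lemma L_pow (m : ℕ) : L ((X - 1 : ℚ[X]) ^ m) = (-1) ^ m / (m + 1) := by
  rw [sub_pow, map_sum]
  have : ∀ j ∈ range (m + 1),
      L ((-1 : ℚ[X]) ^ (j + m) * X ^ j * 1 ^ (m - j) * ((m.choose j : ℕ) : ℚ[X])) =
        (-1 : ℚ) ^ (j + m) * (m.choose j) / (j + 1) := by
    intro j _
    have h : ((-1 : ℚ[X]) ^ (j + m) * X ^ j * 1 ^ (m - j) * ((m.choose j : ℕ) : ℚ[X])) =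
        Polynomial.C ((-1 : ℚ) ^ (j + m) * (m.choose j)) * X ^ j := by
      simp only [_root_.map_mul, map_pow, _root_.map_neg, _root_.map_one, map_natCast]
      ring
    rw [h, L_term]
  rw [Finset.sum_congr rfl this, alt_sum]

theorem sum_k1 (n : ℕ) (hn : 1 ≤ n) :
    (∑ σ : Equiv.Perm (Fin n),
      ((Equiv.Perm.sign σ : ℤ) : ℚ) /
        ((Finset.univ.filter fun i => σ i = i).card + 1 : ℚ))
      = (-1 : ℚ) ^ (n + 1) * n / (n + 1) := by
  obtain ⟨m, rfl⟩ : ∃ m, n = m + 1 := ⟨n - 1, (Nat.succ_pred_eq_of_pos hn).symm⟩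
  set P : ℚ[X] := ∑ σ : Equiv.Perm (Fin (m + 1)),
    Polynomial.C ((Equiv.Perm.sign σ : ℤ) : ℚ) *
      X ^ (Finset.univ.filter fun i => σ i = i).card with hP
  have hQ : P = (X - 1) ^ m * (X + ((m + 1 : ℕ) : ℚ[X]) - 1) := by
    apply Polynomial.eq_of_infinite_eval_eq
    apply Set.Infinite.mono (s := {x : ℚ | x ≠ 1})
    · intro x hx
      simp only [Set.mem_setOf_eq] at hx ⊢
      rw [hP]
      simp only [eval_finset_sum, eval_mul, eval_C, eval_pow, eval_X, eval_sub, eval_add,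
        eval_one, eval_natCast]
      have := eval_id (m + 1) (Nat.le_add_left 1 m) x hx
      simp only [Nat.add_sub_cancel] at this
      rw [this]
    · have : ({x : ℚ | x ≠ 1}) = ({1}ᶜ : Set ℚ) := rfl
      rw [this]
      exact Set.Finite.infinite_compl (Set.finite_singleton 1)
  have hsplit : P = (X - 1 : ℚ[X]) ^ (m + 1) + ((m + 1 : ℚ)) • (X - 1) ^ m := by
    rw [hQ, Polynomial.smul_eq_C_mul]
    simp only [_root_.map_add, _root_.map_one, map_natCast, Polynomial.C_1]
    push_cast
    ring
  have hLP : L P = ∑ σ : Equiv.Perm (Fin (m + 1)),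
      ((Equiv.Perm.sign σ : ℤ) : ℚ) /
        ((Finset.univ.filter fun i => σ i = i).card + 1 : ℚ) := by
    rw [hP, map_sum]
    exact Finset.sum_congr rfl fun σ _ => L_term _ _
  rw [← hLP, hsplit, map_add, L.map_smul, L_pow, L_pow]
  have hm1 : (m : ℚ) + 1 ≠ 0 := by positivity
  have hm2 : (m : ℚ) + 2 ≠ 0 := by positivity
  simp only [smul_eq_mul, pow_succ]
  push_cast
  field_simp
  ring
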